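/- The number of 2-color partitions of n with colors r and b, where color b appears only on even parts, equals the number of quadruples (λ¹, λ², λ³, λ⁴) of partitions with λ¹, λ², λ³ having all parts even, λ⁴ a staircase partition, and total size n. Consequently, a(n) equals the sum over m ≥ 0 with m(m+1)/2 ≤ n of the number of triples of even-part partitions of total size n − m(m+1)/2. -/

import Mathlib

/-- A multiset of natural numbers represents a partition if all parts are positive. -/
def IsPartitionM (m : Multiset ℕ) : Prop := ∀ i ∈ m, 0 < i

/-- A partition all of whose parts are even (and positive). -/
def IsEvenPartition (m : Multiset ℕ) : Prop := IsPartitionM m ∧ ∀ i ∈ m, Even i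

/-- A staircase partition: parts k, k-1, ..., 2, 1 (possibly empty). -/
def IsStaircase (m : Multiset ℕ) : Prop := ∃ k : ℕ, m = (Multiset.range k).map (· + 1)

/-- An odd staircase: parts 2k-1, 2k-3, ..., 3, 1 (possibly empty); its size is k². -/
def IsOddStaircase (m : Multiset ℕ) : Prop := ∃ k : ℕ, m = (Multiset.range k).map (fun i => 2 * i + 1)

/-- A partition into distinct odd parts. -/
def IsDistinctOdd (m : Multiset ℕ) : Prop := m.Nodup ∧ ∀ i ∈ m, Odd i

/-- A partition whose odd parts are distinct (even parts unrestricted). -/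
def IsPOD (m : Multiset ℕ) : Prop := IsPartitionM m ∧ ∀ i ∈ m, Odd i → m.count i ≤ 1

/-- A partition into distinct parts, all divisible by 3. -/
def IsDistinctMul3 (m : Multiset ℕ) : Prop := IsPartitionM m ∧ m.Nodup ∧ ∀ i ∈ m, 3 ∣ i

/-- An overpartition: a partition together with a set of overlined part sizes,
each of which must occur in the partition. -/
def IsOverpartition (x : Multiset ℕ × Finset ℕ) : Prop :=
  IsPartitionM x.1 ∧ ∀ s ∈ x.2, s ∈ x.1

/-- A partition with designated summands: a partition together with, for each part size
occurring with multiplicity `c`, a choice of designated occurrence in `{1, ..., c}`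
(and `0` for non-occurring sizes). -/
def IsDesignated (x : Multiset ℕ × (ℕ → ℕ)) : Prop :=
  IsPartitionM x.1 ∧ ∀ s : ℕ,
    (0 < x.1.count s → 1 ≤ x.2 s ∧ x.2 s ≤ x.1.count s) ∧ (x.1.count s = 0 → x.2 s = 0)



namespace TC

/-! ### Words -/

def tp : List Bool → Multiset ℕ
  | [] => 0
  | true :: w => 0 ::ₘ tp w
  | false :: w => (tp w).map (· + 1)

mutual
def ev : List Bool → List Bool
  | [] => []
  | a :: w => a :: od w
def od : List Bool → List Bool
  | [] => []
  | _ :: w => ev w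
end

def itl : List Bool → List Bool → List Bool
  | [], v => v
  | a :: u, v => a :: itl v u
termination_by u v => u.length + v.length

@[simp] lemma tp_nil : tp [] = 0 := rfl
@[simp] lemma tp_true (w : List Bool) : tp (true :: w) = 0 ::ₘ tp w := rfl
@[simp] lemma tp_false (w : List Bool) : tp (false :: w) = (tp w).map (· + 1) := rfl
@[simp] lemma ev_nil : ev [] = [] := rfl
@[simp] lemma od_nil : od [] = [] := rfl
@[simp] lemma ev_cons (a : Bool) (w : List Bool) : ev (a :: w) = a :: od w := rfl
@[simp] lemma od_cons (a : Bool) (w : List Bool) : od (a :: w) = ev w := rfl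
@[simp] lemma itl_nil (v : List Bool) : itl [] v = v := by simp [itl]
@[simp] lemma itl_cons (a : Bool) (u v : List Bool) : itl (a :: u) v = a :: itl v u := by
  simp [itl]

def Sz (w : List Bool) : ℤ := ((tp w).sum : ℤ)
def Cz (w : List Bool) : ℤ := ((tp w).card : ℤ)
def ch (w : List Bool) : ℤ := Cz (ev w) - Cz (od w)

lemma Sz_false (w : List Bool) : Sz (false :: w) = Sz w + Cz w := by
  simp only [Sz, Cz, tp_false]
  have : ((tp w).map (· + 1)).sum = (tp w).sum + (tp w).card := by
    rw [Multiset.sum_map_add]; simp [Multiset.map_id']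
  rw [this]; push_cast; ring

lemma Sz_true (w : List Bool) : Sz (true :: w) = Sz w := by simp [Sz]
lemma Cz_false (w : List Bool) : Cz (false :: w) = Cz w := by simp [Cz]
lemma Cz_true (w : List Bool) : Cz (true :: w) = Cz w + 1 := by simp [Cz, add_comm]

lemma card_split (w : List Bool) : Cz w = Cz (ev w) + Cz (od w) := by
  induction w with
  | nil => simp [Cz]
  | cons a w ih =>
    cases a <;>
      simp only [Cz_false, Cz_true, ev_cons, od_cons] <;> rw [ih] <;> ring

/-- The master sum identity. -/
lemma sum_split (w : List Bool) :
    2 * Sz w = ch w * (ch w - 1) + 4 * Sz (ev w) + 4 * Sz (od w) := by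
  induction w with
  | nil => simp [Sz, ch, Cz]
  | cons a w ih =>
    have hcard := card_split w
    cases a
    · have hch : ch (false :: w) = - ch w := by
        simp only [ch, ev_cons, od_cons, Cz_false]; ring
      simp only [ev_cons, od_cons, Sz_false, Sz_true, Cz_false, Cz_true, ch] at *
      nlinarith [ih, hcard]
    · have hch : ch (true :: w) = 1 - ch w := by
        simp only [ch, ev_cons, od_cons, Cz_true]; ring
      simp only [ev_cons, od_cons, Sz_false, Sz_true, Cz_false, Cz_true, ch] at *
      nlinarith [ih]

/-! ### Normal form and padding -/

lemma nf : ∀ w w' : List Bool, tp w = tp w' → w.length = w'.length → w = w' := by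
  intro w
  induction w with
  | nil =>
    intro w' _ hl
    cases w' with
    | nil => rfl
    | cons a t => simp at hl
  | cons a t ih =>
    intro w' htp hl
    cases w' with
    | nil => simp at hl
    | cons a' t' =>
      cases a <;> cases a'
      · simp only [tp_false] at htp
        have := Multiset.map_injective (add_left_injective 1) htp
        rw [ih t' this (by simpa using hl)]
      · exfalso
        simp only [tp_false, tp_true] at htp
        have : (0:ℕ) ∈ (tp t).map (· + 1) := by rw [htp]; simp
        simp at this
      · exfalso
        simp only [tp_false, tp_true] at htp
        have : (0:ℕ) ∈ (tp t').map (· + 1) := by rw [← htp]; simp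
        simp at this
      · simp only [tp_true] at htp
        have := (Multiset.cons_inj_right 0).mp htp
        rw [ih t' this (by simpa using hl)]

lemma tp_append_false (w : List Bool) : tp (w ++ [false]) = tp w := by
  induction w with
  | nil => simp [tp]
  | cons a t ih => cases a <;> simp [tp, ih]

lemma tp_append_falses (w : List Bool) (t : ℕ) :
    tp (w ++ List.replicate t false) = tp w := by
  induction t with
  | zero => simp
  | succ t ih =>
    rw [List.replicate_succ', ← List.append_assoc, tp_append_false, ih]

lemma tp_trues_append (s : ℕ) (w : List Bool) :
    tp (List.replicate s true ++ w) = Multiset.replicate s 0 + tp w := by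
  induction s with
  | zero => simp
  | succ s ih => simp [List.replicate_succ, tp, ih, Multiset.replicate_succ]

lemma tp_falses_append (m : ℕ) (w : List Bool) :
    tp (List.replicate m false ++ w) = (tp w).map (· + m) := by
  induction m with
  | zero => simp [Multiset.map_id']
  | succ m ih =>
    simp only [List.replicate_succ, List.cons_append, tp_false, ih, Multiset.map_map]
    apply Multiset.map_congr rfl
    intro x _; simp; omega

lemma evod_append : ∀ x y : List Bool,
    ev (x ++ y) = ev x ++ (if Even x.length then ev y else od y) ∧
    od (x ++ y) = od x ++ (if Even x.length then od y else ev y) := by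
  intro x
  induction x with
  | nil => intro y; simp
  | cons a x ih =>
    intro y
    obtain ⟨h1, h2⟩ := ih y
    constructor
    · simp only [List.cons_append, ev_cons, h2, List.length_cons, Nat.even_add_one]
      by_cases h : Even x.length <;> simp [h]
    · simp only [List.cons_append, od_cons, h1, List.length_cons, Nat.even_add_one]
      by_cases h : Even x.length <;> simp [h]

lemma ev_append_of_even (x y : List Bool) (h : Even x.length) :
    ev (x ++ y) = ev x ++ ev y := by simpa [h] using (evod_append x y).1
lemma od_append_of_even (x y : List Bool) (h : Even x.length) :
    od (x ++ y) = od x ++ od y := by simpa [h] using (evod_append x y).2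

lemma evod_replicate (s : ℕ) (a : Bool) :
    ev (List.replicate (2 * s) a) = List.replicate s a ∧
    od (List.replicate (2 * s) a) = List.replicate s a := by
  induction s with
  | zero => simp
  | succ s ih =>
    have : 2 * (s + 1) = (2 * s) + 1 + 1 := by ring
    rw [this, List.replicate_succ, List.replicate_succ]
    simp [List.replicate_succ, ih.1, ih.2]

lemma length_evod (w : List Bool) :
    (ev w).length = (od w).length ∨ (ev w).length = (od w).length + 1 := by
  induction w with
  | nil => simp
  | cons a w ih =>
    rcases ih with h | h
    · right; simp [h]
    · left; simp [h]

lemma length_ev_add_od (w : List Bool) : (ev w).length + (od w).length = w.length := by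
  induction w with
  | nil => simp
  | cons a w ih => simp only [ev_cons, od_cons, List.length_cons]; omega

lemma itl_length : ∀ n (u v : List Bool), u.length + v.length ≤ n →
    (itl u v).length = u.length + v.length := by
  intro n
  induction n with
  | zero =>
    intro u v h
    have hu : u = [] := by cases u <;> simp_all
    subst hu; simp
  | succ n ih =>
    intro u v h
    cases u with
    | nil => simp
    | cons a u =>
      simp only [itl_cons, List.length_cons]
      rw [ih v u (by simp at h; omega)]
      omega

lemma ev_od_itl : ∀ n (u v : List Bool), u.length + v.length ≤ n →
    v.length ≤ u.length → u.length ≤ v.length + 1 →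
    ev (itl u v) = u ∧ od (itl u v) = v := by
  intro n
  induction n with
  | zero =>
    intro u v h _ _
    have : u = [] := by cases u <;> simp_all
    have : v = [] := by cases v <;> simp_all
    simp_all
  | succ n ih =>
    intro u v h h1 h2
    cases u with
    | nil =>
      have : v = [] := by cases v <;> simp_all
      simp [this]
    | cons a u =>
      simp only [List.length_cons] at h h1 h2
      obtain ⟨e1, e2⟩ := ih v u (by omega) (by omega) (by omega)
      simp [e1, e2]

lemma itl_ev_od (w : List Bool) : itl (ev w) (od w) = w := by
  induction w with
  | nil => simp
  | cons a w ih => simp [ih]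

/-! ### ascending-word construction -/

def ascW : ℕ → List ℕ → List Bool
  | _, [] => []
  | z, p :: t => List.replicate (p - z) false ++ true :: ascW p t

lemma tp_ascW : ∀ (l : List ℕ) (z : ℕ), l.Pairwise (· ≤ ·) → (∀ x ∈ l, z ≤ x) →
    tp (ascW z l) = (l.map (· - z) : List ℕ) := by
  intro l
  induction l with
  | nil => intro z _ _; simp [ascW]
  | cons p t ih =>
    intro z hs hz
    rw [List.pairwise_cons] at hs
    have ht := ih p hs.2 fun x hx => hs.1 x hx
    simp only [ascW, tp_falses_append, tp_true, ht]
    simp only [Multiset.map_cons, List.map_cons, Multiset.map_coe, List.map_map]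
    have hmap : List.map ((fun x => x + (p - z)) ∘ fun x => x - p) t
        = List.map (fun x => x - z) t := by
      apply List.map_congr_left
      intro x hx
      have h1 : p ≤ x := hs.1 x hx
      have h2 : z ≤ p := hz p (by simp)
      simp only [Function.comp_apply]
      omega
    rw [hmap]
    have h2 : z ≤ p := hz p (by simp)
    have : 0 + (p - z) = p - z := by omega
    rw [this]
    rfl

/-- canonical word for a multiset of parts -/
def stdW (q : Multiset ℕ) : List Bool := ascW 0 (q.sort (· ≤ ·))

lemma tp_stdW (q : Multiset ℕ) : tp (stdW q) = q := by
  rw [stdW, tp_ascW _ 0 (q.pairwise_sort _) (fun x _ => Nat.zero_le x)]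
  simp [Multiset.sort_eq]


/-! ### positive parts -/

def pos (m : Multiset ℕ) : Multiset ℕ := m.filter (0 < ·)

lemma pos_spec (m : Multiset ℕ) : m = pos m + Multiset.replicate (m.count 0) 0 := by
  have h1 := Multiset.filter_add_not (0 < ·) m
  have h2 : m.filter (fun x => ¬ 0 < x) = m.filter (fun x => x = 0) := by
    apply Multiset.filter_congr
    intro x _
    constructor
    · intro h; omega
    · intro h; omega
  have h3 : m.filter (fun x => x = 0) = Multiset.replicate (m.count 0) 0 := by
    have := Multiset.filter_eq' m 0
    simpa using this
  conv_lhs => rw [← h1]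
  rw [h2, h3]
  rfl

lemma pos_card_add (m : Multiset ℕ) : (pos m).card + m.count 0 = m.card := by
  conv_rhs => rw [pos_spec m]
  simp

lemma pos_sum (m : Multiset ℕ) : (pos m).sum = m.sum := by
  conv_rhs => rw [pos_spec m]
  simp

lemma pos_add_replicate (q : Multiset ℕ) (z : ℕ) :
    pos (q + Multiset.replicate z 0) = pos q := by
  simp only [pos, Multiset.filter_add]
  have h : (Multiset.replicate z 0).filter (0 < ·) = 0 := by
    rw [Multiset.filter_eq_nil]
    intro a ha
    simp [Multiset.eq_of_mem_replicate ha]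
  rw [h, add_zero]

lemma pos_replicate_add (q : Multiset ℕ) (z : ℕ) :
    pos (Multiset.replicate z 0 + q) = pos q := by
  rw [add_comm, pos_add_replicate]

lemma pos_eq_self {q : Multiset ℕ} (h : ∀ i ∈ q, 0 < i) : pos q = q :=
  Multiset.filter_eq_self.mpr h

lemma pos_pos (m : Multiset ℕ) : ∀ i ∈ pos m, 0 < i := fun _ hi =>
  Multiset.of_mem_filter hi

lemma eq_of_pos_eq_card_eq {m m' : Multiset ℕ} (h : pos m = pos m')
    (hc : m.card = m'.card) : m = m' := by
  have hpc := congrArg Multiset.card h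
  have h1 := pos_card_add m
  have h2 := pos_card_add m'
  have h0 : m.count 0 = m'.count 0 := by omega
  rw [pos_spec m, pos_spec m', h, h0]

/-! ### padding -/

lemma pad_props (w : List Bool) (s t : ℕ) (hl : Even w.length) :
    tp (List.replicate (2*s) true ++ w ++ List.replicate (2*t) false)
      = Multiset.replicate (2*s) 0 + tp w ∧
    ev (List.replicate (2*s) true ++ w ++ List.replicate (2*t) false)
      = List.replicate s true ++ ev w ++ List.replicate t false ∧
    od (List.replicate (2*s) true ++ w ++ List.replicate (2*t) false)
      = List.replicate s true ++ od w ++ List.replicate t false := by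
  have hrl : Even (List.replicate (2*s) true).length := by simp [List.length_replicate]
  refine ⟨?_, ?_, ?_⟩
  · rw [List.append_assoc, tp_trues_append, tp_append_falses]
  · rw [List.append_assoc, ev_append_of_even _ _ hrl, ev_append_of_even _ _ hl,
      (evod_replicate s true).1, (evod_replicate t false).1, ← List.append_assoc]
  · rw [List.append_assoc, od_append_of_even _ _ hrl, od_append_of_even _ _ hl,
      (evod_replicate s true).2, (evod_replicate t false).2, ← List.append_assoc]

lemma pad_data (w : List Bool) (s t : ℕ) (hl : Even w.length) :
    tp (List.replicate (2*s) true ++ w ++ List.replicate (2*t) false)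
      = Multiset.replicate (2*s) 0 + tp w ∧
    tp (ev (List.replicate (2*s) true ++ w ++ List.replicate (2*t) false))
      = Multiset.replicate s 0 + tp (ev w) ∧
    tp (od (List.replicate (2*s) true ++ w ++ List.replicate (2*t) false))
      = Multiset.replicate s 0 + tp (od w) ∧
    ch (List.replicate (2*s) true ++ w ++ List.replicate (2*t) false) = ch w := by
  obtain ⟨h1, h2, h3⟩ := pad_props w s t hl
  have e2 : tp (List.replicate s true ++ ev w ++ List.replicate t false)
      = Multiset.replicate s 0 + tp (ev w) := by
    rw [List.append_assoc, tp_trues_append, tp_append_falses]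
  have e3 : tp (List.replicate s true ++ od w ++ List.replicate t false)
      = Multiset.replicate s 0 + tp (od w) := by
    rw [List.append_assoc, tp_trues_append, tp_append_falses]
  refine ⟨h1, by rw [h2, e2], by rw [h3, e3], ?_⟩
  simp only [ch, Cz, h2, h3, e2, e3, Multiset.card_add, Multiset.card_replicate]
  push_cast
  ring

lemma pad_length (w : List Bool) (s t : ℕ) :
    (List.replicate (2*s) true ++ w ++ List.replicate (2*t) false).length
      = w.length + 2*s + 2*t := by
  simp; omega

/-! ### Key well-definedness lemmas -/

lemma key_welldef (w w' : List Bool)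
    (hcw : Even (tp w).card) (hcw' : Even (tp w').card)
    (hlw : Even w.length) (hlw' : Even w'.length)
    (hp : pos (tp w) = pos (tp w')) :
    ch w = ch w' ∧ pos (tp (ev w)) = pos (tp (ev w'))
      ∧ pos (tp (od w)) = pos (tp (od w')) := by
  obtain ⟨x, hx⟩ := hcw
  obtain ⟨y, hy⟩ := hcw'
  obtain ⟨lx, hlx⟩ := hlw
  obtain ⟨ly, hly⟩ := hlw'
  set a := (tp w).card
  set a' := (tp w').card
  set A := max a a' with hA
  set s := (A - a) / 2 with hs
  set s' := (A - a') / 2 with hs'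
  set M := max (w.length + 2*s) (w'.length + 2*s') with hM
  set t := (M - (w.length + 2*s)) / 2 with ht
  set t' := (M - (w'.length + 2*s')) / 2 with ht'
  obtain ⟨d1, d2, d3, d4⟩ := pad_data w s t ⟨lx, hlx⟩
  obtain ⟨d1', d2', d3', d4'⟩ := pad_data w' s' t' ⟨ly, hly⟩
  have hWW' : List.replicate (2*s) true ++ w ++ List.replicate (2*t) false
      = List.replicate (2*s') true ++ w' ++ List.replicate (2*t') false := by
    apply nf
    · apply eq_of_pos_eq_card_eq
      · rw [d1, d1', pos_replicate_add, pos_replicate_add, hp]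
      · rw [d1, d1']
        simp only [Multiset.card_add, Multiset.card_replicate]
        omega
    · rw [pad_length, pad_length]
      omega
  refine ⟨?_, ?_, ?_⟩
  · rw [← d4, ← d4', hWW']
  · have := congrArg (fun x => pos (tp (ev x))) hWW'
    simp only [d2, d2', pos_replicate_add] at this
    exact this
  · have := congrArg (fun x => pos (tp (od x))) hWW'
    simp only [d3, d3', pos_replicate_add] at this
    exact this

lemma key_inj (w w' : List Bool)
    (hcw : Even (tp w).card) (hcw' : Even (tp w').card)
    (hlw : Even w.length) (hlw' : Even w'.length)
    (hch : ch w = ch w')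
    (hpe : pos (tp (ev w)) = pos (tp (ev w')))
    (hpo : pos (tp (od w)) = pos (tp (od w'))) :
    pos (tp w) = pos (tp w') := by
  obtain ⟨x, hx⟩ := hcw
  obtain ⟨y, hy⟩ := hcw'
  obtain ⟨lx, hlx⟩ := hlw
  obtain ⟨ly, hly⟩ := hlw'
  set a := (tp w).card
  set a' := (tp w').card
  set A := max a a' with hA
  set s := (A - a) / 2 with hs
  set s' := (A - a') / 2 with hs'
  set M := max (w.length + 2*s) (w'.length + 2*s') with hM
  set t := (M - (w.length + 2*s)) / 2 with ht
  set t' := (M - (w'.length + 2*s')) / 2 with ht'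
  obtain ⟨d1, d2, d3, d4⟩ := pad_data w s t ⟨lx, hlx⟩
  obtain ⟨d1', d2', d3', d4'⟩ := pad_data w' s' t' ⟨ly, hly⟩
  set W := List.replicate (2*s) true ++ w ++ List.replicate (2*t) false with hW
  set W' := List.replicate (2*s') true ++ w' ++ List.replicate (2*t') false with hW'
  have hcW : (tp W).card = A := by
    rw [hW, d1]; simp only [Multiset.card_add, Multiset.card_replicate]; omega
  have hcW' : (tp W').card = A := by
    rw [hW', d1']; simp only [Multiset.card_add, Multiset.card_replicate]; omega
  have hlWl : W.length = M := by rw [hW, pad_length]; omega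
  have hlW'l : W'.length = M := by rw [hW', pad_length]; omega
  have hMeven : M % 2 = 0 := by omega
  have hevW : (ev W).length = (od W).length := by
    have h1 := length_ev_add_od W
    have h2 := length_evod W
    omega
  have hevW' : (ev W').length = (od W').length := by
    have h1 := length_ev_add_od W'
    have h2 := length_evod W'
    omega
  have hlev : (ev W).length = (ev W').length := by
    have h1 := length_ev_add_od W
    have h2 := length_ev_add_od W'
    omega
  have hlod : (od W).length = (od W').length := by
    have h1 := length_ev_add_od W
    have h2 := length_ev_add_od W'
    omega
  have hchW : ch W = ch W' := by rw [hW, hW', d4, d4', hch]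
  have hsplit := card_split W
  have hsplit' := card_split W'
  have hCz : Cz W = Cz W' := by simp only [Cz, hcW, hcW']
  have hcevW : (tp (ev W)).card = (tp (ev W')).card := by
    have h9 : Cz (ev W) = Cz (ev W') := by
      simp only [ch] at hchW
      omega
    simpa [Cz] using h9
  have hcodW : (tp (od W)).card = (tp (od W')).card := by
    have h9 : Cz (od W) = Cz (od W') := by
      simp only [ch] at hchW
      omega
    simpa [Cz] using h9
  have hevEq : ev W = ev W' := by
    apply nf _ _ _ hlev
    apply eq_of_pos_eq_card_eq _ hcevW
    rw [hW, hW', d2, d2', pos_replicate_add, pos_replicate_add, hpe]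
  have hodEq : od W = od W' := by
    apply nf _ _ _ hlod
    apply eq_of_pos_eq_card_eq _ hcodW
    rw [hW, hW', d3, d3', pos_replicate_add, pos_replicate_add, hpo]
  have hWW' : W = W' := by
    rw [← itl_ev_od W, ← itl_ev_od W', hevEq, hodEq]
  have := congrArg (fun x => pos (tp x)) hWW'
  rw [hW, hW'] at this
  simp only [← hW, ← hW', d1, d1', pos_replicate_add] at this
  exact this

/-! ### charge codes -/

def kOf (c : ℤ) : ℕ := if 0 < c then (c - 1).toNat else (-c).toNat
def cOf (k : ℕ) : ℤ := if k % 2 = 1 then (k : ℤ) + 1 else -(k : ℤ)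

lemma kOf_cOf (k : ℕ) : kOf (cOf k) = k := by
  unfold kOf cOf
  split_ifs <;> omega

lemma cOf_kOf {c : ℤ} (h : c % 2 = 0) : cOf (kOf c) = c := by
  unfold kOf cOf
  split_ifs <;> omega

lemma cOf_even (k : ℕ) : cOf k % 2 = 0 := by
  unfold cOf; split_ifs <;> omega

lemma cOf_mul (k : ℕ) : cOf k * (cOf k - 1) = (k : ℤ) * (k + 1) := by
  unfold cOf; split_ifs with h
  · have : ((k : ℤ) + 1) * ((k : ℤ) + 1 - 1) = (k : ℤ) * (k + 1) := by ring
    exact this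
  · ring

/-! ### the main maps -/

def wordOf (m : Multiset ℕ) : List Bool :=
  stdW (m + Multiset.replicate (m.card % 2) 0)
    ++ List.replicate ((stdW (m + Multiset.replicate (m.card % 2) 0)).length % 2) false

lemma wordOf_tp (m : Multiset ℕ) :
    tp (wordOf m) = m + Multiset.replicate (m.card % 2) 0 := by
  unfold wordOf
  rw [tp_append_falses, tp_stdW]

lemma wordOf_card_even (m : Multiset ℕ) : (tp (wordOf m)).card % 2 = 0 := by
  rw [wordOf_tp]
  simp only [Multiset.card_add, Multiset.card_replicate]
  omega

lemma wordOf_len_even (m : Multiset ℕ) : (wordOf m).length % 2 = 0 := by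
  unfold wordOf
  rw [List.length_append, List.length_replicate]
  omega

lemma wordOf_pos (m : Multiset ℕ) (hm : ∀ i ∈ m, 0 < i) :
    pos (tp (wordOf m)) = m := by
  rw [wordOf_tp, pos_add_replicate, pos_eq_self hm]

def Gw (x : ℕ × Multiset ℕ × Multiset ℕ) : List Bool :=
  let u0 := stdW (x.2.1 + Multiset.replicate (x.2.2.card + (cOf x.1).toNat) 0)
  let v0 := stdW (x.2.2 + Multiset.replicate (x.2.1.card + (-(cOf x.1)).toNat) 0)
  let L := max u0.length v0.length
  itl (u0 ++ List.replicate (L - u0.length) false)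
      (v0 ++ List.replicate (L - v0.length) false)

lemma Gw_spec (x : ℕ × Multiset ℕ × Multiset ℕ) :
    tp (ev (Gw x)) = x.2.1 + Multiset.replicate (x.2.2.card + (cOf x.1).toNat) 0 ∧
    tp (od (Gw x)) = x.2.2 + Multiset.replicate (x.2.1.card + (-(cOf x.1)).toNat) 0 ∧
    ch (Gw x) = cOf x.1 ∧
    (tp (Gw x)).card % 2 = 0 ∧
    (Gw x).length % 2 = 0 := by
  set q0 := x.2.1
  set q1 := x.2.2
  set c := cOf x.1 with hc
  set u0 := stdW (q0 + Multiset.replicate (q1.card + c.toNat) 0) with hu0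
  set v0 := stdW (q1 + Multiset.replicate (q0.card + (-c).toNat) 0) with hv0
  set L := max u0.length v0.length with hL
  set u := u0 ++ List.replicate (L - u0.length) false with hu
  set v := v0 ++ List.replicate (L - v0.length) false with hv
  have hul : u.length = L := by rw [hu, List.length_append, List.length_replicate]; omega
  have hvl : v.length = L := by rw [hv, List.length_append, List.length_replicate]; omega
  have hGw : Gw x = itl u v := rfl
  have hevod := ev_od_itl (u.length + v.length) u v le_rfl (by omega) (by omega)
  have htpu : tp u = q0 + Multiset.replicate (q1.card + c.toNat) 0 := by
    rw [hu, tp_append_falses, hu0, tp_stdW]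
  have htpv : tp v = q1 + Multiset.replicate (q0.card + (-c).toNat) 0 := by
    rw [hv, tp_append_falses, hv0, tp_stdW]
  have hcu : (tp u).card = q0.card + (q1.card + c.toNat) := by
    rw [htpu]; simp
  have hcv : (tp v).card = q1.card + (q0.card + (-c).toNat) := by
    rw [htpv]; simp
  have hceven : c % 2 = 0 := cOf_even x.1
  refine ⟨?_, ?_, ?_, ?_, ?_⟩
  · rw [hGw, hevod.1, htpu]
  · rw [hGw, hevod.2, htpv]
  · rw [hGw]
    simp only [ch, Cz, hevod.1, hevod.2, hcu, hcv]
    push_cast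
    omega
  · rw [hGw]
    have := card_split (itl u v)
    simp only [Cz, hevod.1, hevod.2] at this
    have hq : (tp (itl u v)).card = (tp u).card + (tp v).card := by exact_mod_cast this
    rw [hq, hcu, hcv]
    omega
  · rw [hGw, itl_length (u.length + v.length) u v le_rfl]
    omega

def Gq (x : ℕ × Multiset ℕ × Multiset ℕ) : Multiset ℕ := pos (tp (Gw x))

def Fq (m : Multiset ℕ) : ℕ × Multiset ℕ × Multiset ℕ :=
  (kOf (ch (wordOf m)), pos (tp (ev (wordOf m))), pos (tp (od (wordOf m))))

lemma even_iff_mod (n : ℕ) : Even n ↔ n % 2 = 0 := Nat.even_iff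

lemma ch_even (w : List Bool) (h : (tp w).card % 2 = 0) : ch w % 2 = 0 := by
  have := card_split w
  simp only [Cz, ch] at *
  omega

lemma Gq_pos (x : ℕ × Multiset ℕ × Multiset ℕ) : ∀ i ∈ Gq x, 0 < i :=
  pos_pos _

/-- Round trip: F ∘ G = id (on positive-part inputs). -/
lemma Fq_Gq (x : ℕ × Multiset ℕ × Multiset ℕ)
    (h1 : ∀ i ∈ x.2.1, 0 < i) (h2 : ∀ i ∈ x.2.2, 0 < i) :
    Fq (Gq x) = x := by
  obtain ⟨g1, g2, g3, g4, g5⟩ := Gw_spec x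
  have hposG : pos (tp (wordOf (Gq x))) = pos (tp (Gw x)) := by
    rw [wordOf_pos _ (Gq_pos x)]
    rfl
  have hkey := key_welldef (wordOf (Gq x)) (Gw x)
    ((even_iff_mod _).mpr (wordOf_card_even _)) ((even_iff_mod _).mpr g4)
    ((even_iff_mod _).mpr (wordOf_len_even _)) ((even_iff_mod _).mpr g5) hposG
  obtain ⟨k1, k2, k3⟩ := hkey
  unfold Fq
  rw [k1, k2, k3, g1, g2, g3, pos_add_replicate, pos_add_replicate,
    pos_eq_self h1, pos_eq_self h2, kOf_cOf]

/-- Round trip: G ∘ F = id. -/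
lemma Gq_Fq (m : Multiset ℕ) (hm : ∀ i ∈ m, 0 < i) : Gq (Fq m) = m := by
  obtain ⟨g1, g2, g3, g4, g5⟩ := Gw_spec (Fq m)
  have hchm : ch (wordOf m) % 2 = 0 := ch_even _ (wordOf_card_even m)
  have hch : ch (Gw (Fq m)) = ch (wordOf m) := by
    rw [g3]
    show cOf (Fq m).1 = _
    unfold Fq
    exact cOf_kOf hchm
  have hpe : pos (tp (ev (Gw (Fq m)))) = pos (tp (ev (wordOf m))) := by
    rw [g1]
    show pos ((Fq m).2.1 + _) = _
    rw [pos_add_replicate]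
    unfold Fq
    simp [pos, Multiset.filter_filter]
  have hpo : pos (tp (od (Gw (Fq m)))) = pos (tp (od (wordOf m))) := by
    rw [g2]
    show pos ((Fq m).2.2 + _) = _
    rw [pos_add_replicate]
    unfold Fq
    simp [pos, Multiset.filter_filter]
  have hkey := key_inj (Gw (Fq m)) (wordOf m)
    ((even_iff_mod _).mpr g4) ((even_iff_mod _).mpr (wordOf_card_even _))
    ((even_iff_mod _).mpr g5) ((even_iff_mod _).mpr (wordOf_len_even _))
    hch hpe hpo
  unfold Gq
  rw [hkey, wordOf_pos _ hm]

/-- The weight identity. -/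
lemma Fq_sum (m : Multiset ℕ) :
    2 * m.sum = (Fq m).1 * ((Fq m).1 + 1) + 4 * (Fq m).2.1.sum + 4 * (Fq m).2.2.sum := by
  have hs := sum_split (wordOf m)
  have hchm : ch (wordOf m) % 2 = 0 := ch_even _ (wordOf_card_even m)
  have h1 : Sz (wordOf m) = (m.sum : ℤ) := by
    simp only [Sz, wordOf_tp]
    simp
  have h2 : ch (wordOf m) * (ch (wordOf m) - 1)
      = ((Fq m).1 : ℤ) * ((Fq m).1 + 1) := by
    have : ch (wordOf m) = cOf (Fq m).1 := by
      show _ = cOf (kOf (ch (wordOf m)))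
      rw [cOf_kOf hchm]
    rw [this, cOf_mul]
  have h3 : Sz (ev (wordOf m)) = ((Fq m).2.1.sum : ℤ) := by
    show ((tp (ev (wordOf m))).sum : ℤ) = _
    rw [show (Fq m).2.1 = pos (tp (ev (wordOf m))) from rfl, pos_sum]
  have h4 : Sz (od (wordOf m)) = ((Fq m).2.2.sum : ℤ) := by
    show ((tp (od (wordOf m))).sum : ℤ) = _
    rw [show (Fq m).2.2 = pos (tp (od (wordOf m))) from rfl, pos_sum]
  rw [h1, h2, h3, h4] at hs
  exact_mod_cast hs

/-! ### doubling, halving, staircases -/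

def dbl (q : Multiset ℕ) : Multiset ℕ := q.map (fun i => 2 * i)
def hlv (q : Multiset ℕ) : Multiset ℕ := q.map (fun i => i / 2)


lemma hlv_dbl (q : Multiset ℕ) : hlv (dbl q) = q := by
  simp only [hlv, dbl, Multiset.map_map]
  conv_rhs => rw [← Multiset.map_id q]
  apply Multiset.map_congr rfl
  intro x _
  simp only [Function.comp_apply, id_eq]
  omega

lemma dbl_hlv {q : Multiset ℕ} (h : ∀ i ∈ q, Even i) : dbl (hlv q) = q := by
  simp only [hlv, dbl, Multiset.map_map]
  conv_rhs => rw [← Multiset.map_id q]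
  apply Multiset.map_congr rfl
  intro x hx
  obtain ⟨r, hr⟩ := h x hx
  simp only [Function.comp_apply, id_eq]
  omega

lemma dbl_sum (q : Multiset ℕ) : (dbl q).sum = 2 * q.sum := by
  simp only [dbl]
  induction q using Multiset.induction with
  | empty => simp
  | cons a s ih => simp [ih]; ring

lemma hlv_sum {q : Multiset ℕ} (h : ∀ i ∈ q, Even i) : 2 * (hlv q).sum = q.sum := by
  conv_rhs => rw [← dbl_hlv h]
  rw [dbl_sum]

lemma dbl_even_partition {q : Multiset ℕ} (hp : ∀ i ∈ q, 0 < i) :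
    (∀ i ∈ dbl q, 0 < i) ∧ (∀ i ∈ dbl q, Even i) := by
  constructor <;> intro i hi <;>
    · simp only [dbl, Multiset.mem_map] at hi
      obtain ⟨j, hj, rfl⟩ := hi
      first
        | (have := hp j hj; omega)
        | exact ⟨j, by ring⟩

lemma hlv_pos {q : Multiset ℕ} (hp : ∀ i ∈ q, 0 < i) (he : ∀ i ∈ q, Even i) :
    ∀ i ∈ hlv q, 0 < i := by
  intro i hi
  simp only [hlv, Multiset.mem_map] at hi
  obtain ⟨j, hj, rfl⟩ := hi
  obtain ⟨r, hr⟩ := he j hj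
  have := hp j hj
  omega

lemma stair_card (k : ℕ) : ((Multiset.range k).map (· + 1)).card = k := by simp

lemma stair_sum2 (k : ℕ) : 2 * ((Multiset.range k).map (· + 1)).sum = k * (k + 1) := by
  induction k with
  | zero => simp
  | succ k ih =>
    simp only [Multiset.range_succ, Multiset.map_cons, Multiset.sum_cons] at *
    have h : (k+1) * (k+1+1) = k * (k+1) + 2 * (k+1) := by ring
    omega

lemma stair_sum (k : ℕ) : ((Multiset.range k).map (· + 1)).sum = k * (k + 1) / 2 := by
  have := stair_sum2 k
  omega

lemma stair_pos (k : ℕ) : ∀ i ∈ (Multiset.range k).map (· + 1), 0 < i := by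
  intro i hi
  simp only [Multiset.mem_map] at hi
  obtain ⟨j, _, rfl⟩ := hi
  omega

lemma le_tri (k : ℕ) : k ≤ k * (k + 1) / 2 := by
  have h : 2 * k ≤ k * (k + 1) := by
    rcases Nat.eq_zero_or_pos k with h | h
    · simp [h]
    · have : k * 2 ≤ k * (k + 1) := Nat.mul_le_mul_left k (by omega)
      omega
  omega

/-! ### partition-level weight identity -/

lemma Fq_weight (m : Multiset ℕ) :
    m.sum = ((Multiset.range (Fq m).1).map (· + 1)).sum
      + (dbl (Fq m).2.1).sum + (dbl (Fq m).2.2).sum := by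
  have h1 := Fq_sum m
  have h2 := stair_sum2 (Fq m).1
  rw [dbl_sum, dbl_sum]
  omega

/-! ### finiteness -/

lemma count_bound {m : Multiset ℕ} {N : ℕ} (hp : ∀ i ∈ m, 0 < i) (hs : m.sum ≤ N)
    (i : ℕ) : m.count i ≤ N * (Multiset.range (N + 1)).count i := by
  by_cases hc : m.count i = 0
  · omega
  · have him : i ∈ m := by
      rw [← Multiset.count_pos]; omega
    have hipos : 0 < i := hp i him
    have hile : i ≤ m.sum := Multiset.single_le_sum (fun x _ => Nat.zero_le x) i him
    have hlt : i < N + 1 := by omega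
    have hcnt : (Multiset.range (N + 1)).count i = 1 := by
      rw [Multiset.range, Multiset.coe_count, List.count_eq_one_of_mem]
      · exact List.nodup_range
      · simpa using hlt
    rw [hcnt, mul_one]
    -- count i m * i ≤ sum
    have hrep : Multiset.replicate (m.count i) i ≤ m := by
      rw [← Multiset.filter_eq']
      exact Multiset.filter_le _ m
    obtain ⟨u, hu⟩ := Multiset.le_iff_exists_add.mp hrep
    have hsum := congrArg Multiset.sum hu
    rw [Multiset.sum_add, Multiset.sum_replicate, smul_eq_mul] at hsum
    have : m.count i ≤ m.count i * i := Nat.le_mul_of_pos_right _ hipos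
    omega

lemma finB (N : ℕ) : Finite {m : Multiset ℕ // (∀ i ∈ m, 0 < i) ∧ m.sum ≤ N} := by
  have hmem : ∀ x : {m : Multiset ℕ // (∀ i ∈ m, 0 < i) ∧ m.sum ≤ N},
      x.1 ∈ Finset.Iic (N • Multiset.range (N + 1)) := by
    rintro ⟨m, hp, hs⟩
    rw [Finset.mem_Iic, Multiset.le_iff_count]
    intro i
    rw [Multiset.count_nsmul]
    exact count_bound hp hs i
  apply Finite.of_injective (fun x => (⟨x.1, hmem x⟩ : ↥(Finset.Iic (N • Multiset.range (N + 1)))))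
  intro a b h
  simp only [Subtype.mk.injEq] at h
  exact Subtype.ext h

end TC


open TC

lemma Fq_pos1 (m : Multiset ℕ) : ∀ i ∈ (Fq m).2.1, 0 < i := by
  unfold Fq; exact pos_pos _
lemma Fq_pos2 (m : Multiset ℕ) : ∀ i ∈ (Fq m).2.2, 0 < i := by
  unfold Fq; exact pos_pos _

noncomputable def eqv1 (n : ℕ) :
    {x : Multiset ℕ × Multiset ℕ //
        IsPartitionM x.1 ∧ IsEvenPartition x.2 ∧ x.1.sum + x.2.sum = n} ≃
    {t : Multiset ℕ × Multiset ℕ × Multiset ℕ × Multiset ℕ //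
        IsEvenPartition t.1 ∧ IsEvenPartition t.2.1 ∧ IsEvenPartition t.2.2.1 ∧
        IsStaircase t.2.2.2 ∧
        t.1.sum + t.2.1.sum + t.2.2.1.sum + t.2.2.2.sum = n} where
  toFun x := ⟨(x.1.2, dbl (Fq x.1.1).2.1, dbl (Fq x.1.1).2.2,
      (Multiset.range (Fq x.1.1).1).map (· + 1)), by
    have hx2 := x.2.2.1
    have hsum := x.2.2.2
    have hw := Fq_weight x.1.1
    refine ⟨hx2,
      ⟨(dbl_even_partition (Fq_pos1 x.1.1)).1, (dbl_even_partition (Fq_pos1 x.1.1)).2⟩,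
      ⟨(dbl_even_partition (Fq_pos2 x.1.1)).1, (dbl_even_partition (Fq_pos2 x.1.1)).2⟩,
      ⟨(Fq x.1.1).1, rfl⟩, ?_⟩
    dsimp only
    omega⟩
  invFun t := ⟨(Gq (t.1.2.2.2.card, hlv t.1.2.1, hlv t.1.2.2.1), t.1.1), by
    have h1 := t.2.1
    have h2 := t.2.2.1
    have h3 := t.2.2.2.1
    have h5 := t.2.2.2.2.2
    obtain ⟨k, hk⟩ := t.2.2.2.2.1
    refine ⟨Gq_pos _, h1, ?_⟩
    have hfg := Fq_Gq (k, hlv t.1.2.1, hlv t.1.2.2.1) (hlv_pos h2.1 h2.2) (hlv_pos h3.1 h3.2)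
    have hw := Fq_weight (Gq (k, hlv t.1.2.1, hlv t.1.2.2.1))
    rw [hfg] at hw
    dsimp only at hw
    rw [dbl_hlv h2.2, dbl_hlv h3.2] at hw
    have hcard : t.1.2.2.2.card = k := by rw [hk, stair_card]
    rw [hcard]
    have hsum4 : t.1.2.2.2.sum = ((Multiset.range k).map (· + 1)).sum := by rw [hk]
    dsimp only
    omega⟩
  left_inv := by
    intro x
    apply Subtype.ext
    dsimp only
    rw [stair_card, hlv_dbl, hlv_dbl]
    have heta : ((Fq x.1.1).1, (Fq x.1.1).2.1, (Fq x.1.1).2.2) = Fq x.1.1 := rfl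
    rw [heta, Gq_Fq x.1.1 x.2.1]
  right_inv := by
    intro t
    have h2 := t.2.2.1
    have h3 := t.2.2.2.1
    obtain ⟨k, hk⟩ := t.2.2.2.2.1
    apply Subtype.ext
    dsimp only
    rw [hk, stair_card]
    rw [Fq_Gq (k, hlv t.1.2.1, hlv t.1.2.2.1) (hlv_pos h2.1 h2.2) (hlv_pos h3.1 h3.2)]
    dsimp only
    rw [dbl_hlv h2.2, dbl_hlv h3.2, ← hk]

lemma finite_quad (n : ℕ) : Finite {t : Multiset ℕ × Multiset ℕ × Multiset ℕ × Multiset ℕ //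
    IsEvenPartition t.1 ∧ IsEvenPartition t.2.1 ∧ IsEvenPartition t.2.2.1 ∧
    IsStaircase t.2.2.2 ∧
    t.1.sum + t.2.1.sum + t.2.2.1.sum + t.2.2.2.sum = n} := by
  haveI := finB n
  apply Finite.of_injective (β := {m : Multiset ℕ // (∀ i ∈ m, 0 < i) ∧ m.sum ≤ n} ×
      {m : Multiset ℕ // (∀ i ∈ m, 0 < i) ∧ m.sum ≤ n} ×
      {m : Multiset ℕ // (∀ i ∈ m, 0 < i) ∧ m.sum ≤ n} ×
      {m : Multiset ℕ // (∀ i ∈ m, 0 < i) ∧ m.sum ≤ n})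
    (fun t => (⟨t.1.1, t.2.1.1, by have := t.2.2.2.2.2; omega⟩,
               ⟨t.1.2.1, t.2.2.1.1, by have := t.2.2.2.2.2; omega⟩,
               ⟨t.1.2.2.1, t.2.2.2.1.1, by have := t.2.2.2.2.2; omega⟩,
               ⟨t.1.2.2.2, by
                  obtain ⟨k, hk⟩ := t.2.2.2.2.1
                  rw [hk]; exact stair_pos k,
                 by have := t.2.2.2.2.2; omega⟩))
  intro a b h
  simp only [Prod.mk.injEq, Subtype.mk.injEq] at h
  apply Subtype.ext
  obtain ⟨e1, e2, e3, e4⟩ := h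
  have ha := a.1
  exact Prod.ext e1 (Prod.ext e2 (Prod.ext e3 e4))

lemma finite_tri (N : ℕ) : Finite {t : Multiset ℕ × Multiset ℕ × Multiset ℕ //
    IsEvenPartition t.1 ∧ IsEvenPartition t.2.1 ∧ IsEvenPartition t.2.2 ∧
    t.1.sum + t.2.1.sum + t.2.2.sum = N} := by
  haveI := finB N
  apply Finite.of_injective (β := {m : Multiset ℕ // (∀ i ∈ m, 0 < i) ∧ m.sum ≤ N} ×
      {m : Multiset ℕ // (∀ i ∈ m, 0 < i) ∧ m.sum ≤ N} ×
      {m : Multiset ℕ // (∀ i ∈ m, 0 < i) ∧ m.sum ≤ N})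
    (fun t => (⟨t.1.1, t.2.1.1, by have := t.2.2.2.2; omega⟩,
               ⟨t.1.2.1, t.2.2.1.1, by have := t.2.2.2.2; omega⟩,
               ⟨t.1.2.2, t.2.2.2.1.1, by have := t.2.2.2.2; omega⟩))
  intro a b h
  simp only [Prod.mk.injEq, Subtype.mk.injEq] at h
  apply Subtype.ext
  obtain ⟨e1, e2, e3⟩ := h
  exact Prod.ext e1 (Prod.ext e2 e3)

lemma part2 (n : ℕ) :
    Nat.card {t : Multiset ℕ × Multiset ℕ × Multiset ℕ × Multiset ℕ //
        IsEvenPartition t.1 ∧ IsEvenPartition t.2.1 ∧ IsEvenPartition t.2.2.1 ∧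
        IsStaircase t.2.2.2 ∧
        t.1.sum + t.2.1.sum + t.2.2.1.sum + t.2.2.2.sum = n} =
      ∑ m ∈ (Finset.range (n + 1)).filter (fun m => m * (m + 1) / 2 ≤ n),
        Nat.card {t : Multiset ℕ × Multiset ℕ × Multiset ℕ //
          IsEvenPartition t.1 ∧ IsEvenPartition t.2.1 ∧ IsEvenPartition t.2.2 ∧
          t.1.sum + t.2.1.sum + t.2.2.sum = n - m * (m + 1) / 2} := by
  classical
  haveI := finite_quad n
  haveI : Fintype {t : Multiset ℕ × Multiset ℕ × Multiset ℕ × Multiset ℕ //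
      IsEvenPartition t.1 ∧ IsEvenPartition t.2.1 ∧ IsEvenPartition t.2.2.1 ∧
      IsStaircase t.2.2.2 ∧
      t.1.sum + t.2.1.sum + t.2.2.1.sum + t.2.2.2.sum = n} := Fintype.ofFinite _
  rw [Nat.card_eq_fintype_card, ← Finset.card_univ]
  have hmem : ∀ t ∈ (Finset.univ : Finset {t : Multiset ℕ × Multiset ℕ × Multiset ℕ × Multiset ℕ //
      IsEvenPartition t.1 ∧ IsEvenPartition t.2.1 ∧ IsEvenPartition t.2.2.1 ∧
      IsStaircase t.2.2.2 ∧
      t.1.sum + t.2.1.sum + t.2.2.1.sum + t.2.2.2.sum = n}),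
      t.1.2.2.2.card ∈ (Finset.range (n + 1)).filter (fun m => m * (m + 1) / 2 ≤ n) := by
    intro t _
    have h5 := t.2.2.2.2.2
    obtain ⟨k, hk⟩ := t.2.2.2.2.1
    have hcard : t.1.2.2.2.card = k := by rw [hk, stair_card]
    have hsum4 : t.1.2.2.2.sum = ((Multiset.range k).map (· + 1)).sum := by rw [hk]
    have hs := stair_sum k
    have hl := le_tri k
    rw [Finset.mem_filter, Finset.mem_range, hcard]
    omega
  rw [Finset.card_eq_sum_card_fiberwise hmem]
  apply Finset.sum_congr rfl
  intro m hm
  rw [Finset.mem_filter, Finset.mem_range] at hm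
  haveI := finite_tri (n - m * (m + 1) / 2)
  haveI : Fintype {t : Multiset ℕ × Multiset ℕ × Multiset ℕ //
      IsEvenPartition t.1 ∧ IsEvenPartition t.2.1 ∧ IsEvenPartition t.2.2 ∧
      t.1.sum + t.2.1.sum + t.2.2.sum = n - m * (m + 1) / 2} := Fintype.ofFinite _
  rw [Nat.card_eq_fintype_card, ← Finset.card_univ]
  refine Finset.card_bij'
    (fun t ht => (⟨(t.1.1, t.1.2.1, t.1.2.2.1), by
      have h1 := t.2.1
      have h2 := t.2.2.1
      have h3 := t.2.2.2.1
      have h5 := t.2.2.2.2.2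
      refine ⟨h1, h2, h3, ?_⟩
      rw [Finset.mem_filter] at ht
      have hcm := ht.2
      obtain ⟨k, hk⟩ := t.2.2.2.2.1
      have hcard : t.1.2.2.2.card = k := by rw [hk, stair_card]
      have hsum4 : t.1.2.2.2.sum = ((Multiset.range k).map (· + 1)).sum := by rw [hk]
      have hs := stair_sum k
      have hkm : k = m := by omega
      subst hkm
      dsimp only
      omega⟩ : {t : Multiset ℕ × Multiset ℕ × Multiset ℕ //
          IsEvenPartition t.1 ∧ IsEvenPartition t.2.1 ∧ IsEvenPartition t.2.2 ∧
          t.1.sum + t.2.1.sum + t.2.2.sum = n - m * (m + 1) / 2}))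
    (fun r _ => (⟨(r.1.1, r.1.2.1, r.1.2.2, (Multiset.range m).map (· + 1)), by
      have h1 := r.2.1
      have h2 := r.2.2.1
      have h3 := r.2.2.2.1
      have h4 := r.2.2.2.2
      refine ⟨h1, h2, h3, ⟨m, rfl⟩, ?_⟩
      have hs := stair_sum2 m
      dsimp only
      omega⟩ : {t : Multiset ℕ × Multiset ℕ × Multiset ℕ × Multiset ℕ //
        IsEvenPartition t.1 ∧ IsEvenPartition t.2.1 ∧ IsEvenPartition t.2.2.1 ∧
        IsStaircase t.2.2.2 ∧
        t.1.sum + t.2.1.sum + t.2.2.1.sum + t.2.2.2.sum = n}))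
    (fun a _ => Finset.mem_univ _)
    (fun r _ => by
      rw [Finset.mem_filter]
      exact ⟨Finset.mem_univ _, stair_card m⟩)
    (fun t ht => by
      rw [Finset.mem_filter] at ht
      have hcm := ht.2
      obtain ⟨k, hk⟩ := t.2.2.2.2.1
      have hcard : t.1.2.2.2.card = k := by rw [hk, stair_card]
      have hkm : k = m := by omega
      apply Subtype.ext
      dsimp only
      rw [← hkm, ← hk]) 
    (fun r _ => by
      apply Subtype.ext
      rfl)

theorem two_color_count (n : ℕ) :
    Nat.card {x : Multiset ℕ × Multiset ℕ //
        IsPartitionM x.1 ∧ IsEvenPartition x.2 ∧ x.1.sum + x.2.sum = n} =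
      Nat.card {t : Multiset ℕ × Multiset ℕ × Multiset ℕ × Multiset ℕ //
        IsEvenPartition t.1 ∧ IsEvenPartition t.2.1 ∧ IsEvenPartition t.2.2.1 ∧
        IsStaircase t.2.2.2 ∧
        t.1.sum + t.2.1.sum + t.2.2.1.sum + t.2.2.2.sum = n} ∧
    Nat.card {x : Multiset ℕ × Multiset ℕ //
        IsPartitionM x.1 ∧ IsEvenPartition x.2 ∧ x.1.sum + x.2.sum = n} =
      ∑ m ∈ (Finset.range (n + 1)).filter (fun m => m * (m + 1) / 2 ≤ n),
        Nat.card {t : Multiset ℕ × Multiset ℕ × Multiset ℕ //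
          IsEvenPartition t.1 ∧ IsEvenPartition t.2.1 ∧ IsEvenPartition t.2.2 ∧
          t.1.sum + t.2.1.sum + t.2.2.sum = n - m * (m + 1) / 2} := by
  constructor
  · exact Nat.card_congr (eqv1 n)
  · exact (Nat.card_congr (eqv1 n)).trans (part2 n)
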